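/- Let m ≥ 1, κ > 0, 0 < a = κ/2 − 1 (so κ > 2), μ > 0 with μ > 2(m+1)/κ satisfying Σ_{j=0}^{m+1} ((2a − κj/(m+1))·a^{j−1}/j!)·μ^j = 0, and define φ(σ) = (2σ/μ) − ((−2 + κμ/(m+1))/μ^{m+2})·Σ_{j=0}^{m} ((m+1)!/j!)·μ^j·σ^{j−m} (the ν = 0, λ = −1 solution). Then φ'(a) = κ − 2a = 2. -/

import Mathlib

/-- Shift lemma: `∑_{j<k+1} j x^j/j! = x ∑_{j<k} x^j/j!`. -/
lemma aux_shift (x : ℝ) (k : ℕ) :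
    ∑ j ∈ Finset.range (k + 1), (j : ℝ) * x ^ j / (Nat.factorial j : ℝ)
      = x * ∑ j ∈ Finset.range k, x ^ j / (Nat.factorial j : ℝ) := by
  rw [Finset.sum_range_succ']
  simp only [Nat.cast_zero, pow_zero, Nat.factorial_zero, Nat.cast_one, zero_mul, zero_div,
    add_zero, Finset.mul_sum]
  refine Finset.sum_congr rfl fun j _ => ?_
  have hfac : (Nat.factorial (j + 1) : ℝ) = ((j : ℝ) + 1) * Nat.factorial j := by
    push_cast [Nat.factorial_succ]; ring
  have h0 : (Nat.factorial j : ℝ) ≠ 0 := by positivity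
  have h1 : ((j : ℝ) + 1) ≠ 0 := by positivity
  rw [hfac]
  push_cast
  field_simp
  ring

/-- Derivative condition at the zero of the shrinking-soliton profile: with a = κ/2 − 1,
    μ > 2(m+1)/κ a root of the polynomial equation (so φ(a) = 0), the ν = 0, λ = −1
    profile satisfies φ'(a) = κ − 2a = 2. -/
theorem stmt_18 (m : ℕ) (hm : 1 ≤ m) (κ μ a : ℝ) (hκ : 2 < κ)
    (ha : a = κ / 2 - 1) (hμ : 2 * (m + 1) / κ < μ)
    (hroot : ∑ j ∈ Finset.range (m + 2),
        ((2 * a - κ * j / (m + 1)) * a ^ ((j : ℤ) - 1) / (Nat.factorial j : ℝ)) * μ ^ j = 0)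
    (φ : ℝ → ℝ)
    (hφ : ∀ σ : ℝ, 0 < σ → φ σ = 2 * σ / μ -
      ((-2 + κ * μ / (m + 1)) / μ ^ (m + 2)) *
        ∑ j ∈ Finset.range (m + 1),
          ((Nat.factorial (m + 1) : ℝ) / (Nat.factorial j : ℝ)) * μ ^ j * σ ^ ((j : ℤ) - m)) :
    deriv φ a = κ - 2 * a ∧ κ - 2 * a = 2 := by
  have hκ0 : (0:ℝ) < κ := by linarith
  have ha0 : 0 < a := by rw [ha]; linarith
  have hμ0 : 0 < μ := lt_trans (by positivity) hμ
  have hm1 : (0:ℝ) < (m:ℝ) + 1 := by positivity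
  have hβ0 : (0:ℝ) < -2 + κ * μ / (m + 1) := by
    rw [div_lt_iff₀ hκ0] at hμ
    have h2 : 2 < κ * μ / (m + 1) := by rw [lt_div_iff₀ hm1]; nlinarith
    linarith
  set β : ℝ := -2 + κ * μ / (m + 1) with hβdef
  set x : ℝ := a * μ with hxdef
  set E : ℕ → ℝ := fun k => ∑ j ∈ Finset.range k, x ^ j / (Nat.factorial j : ℝ) with hEdef
  -- rewrite the root equation
  have hroot' : 2 * a * E (m + 2) - κ / (m + 1) * (x * E (m + 1)) = 0 := by
    have hterm : ∀ j ∈ Finset.range (m + 2),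
        ((2 * a - κ * j / (m + 1)) * a ^ ((j : ℤ) - 1) / (Nat.factorial j : ℝ)) * μ ^ j
          = a⁻¹ * (2 * a * (x ^ j / (Nat.factorial j : ℝ))
              - κ / (m + 1) * ((j : ℝ) * x ^ j / (Nat.factorial j : ℝ))) := by
      intro j _
      have hz : a ^ ((j : ℤ) - 1) = a ^ j / a := by
        rw [zpow_sub₀ ha0.ne', zpow_natCast, zpow_one]
      rw [hz, hxdef, mul_pow]
      have h0 : (Nat.factorial j : ℝ) ≠ 0 := by positivity
      field_simp
    rw [Finset.sum_congr rfl hterm, ← Finset.mul_sum] at hroot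
    have hsum : ∑ j ∈ Finset.range (m + 2),
        (2 * a * (x ^ j / (Nat.factorial j : ℝ))
          - κ / (m + 1) * ((j : ℝ) * x ^ j / (Nat.factorial j : ℝ))) = 0 :=
      (mul_eq_zero.mp hroot).resolve_left (inv_ne_zero ha0.ne')
    rw [Finset.sum_sub_distrib, ← Finset.mul_sum, ← Finset.mul_sum] at hsum
    rw [hEdef]
    simpa [aux_shift x (m + 1)] using hsum
  -- key identity for E (m+1)
  have hkey : β * E (m + 1) = 2 * x ^ (m + 1) / (Nat.factorial (m + 1) : ℝ) := by
    have hsucc : E (m + 2) = E (m + 1) + x ^ (m + 1) / (Nat.factorial (m + 1) : ℝ) := by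
      rw [hEdef]; exact Finset.sum_range_succ _ (m + 1)
    have hfac : (Nat.factorial (m + 1) : ℝ) ≠ 0 := by positivity
    -- from hroot': (κ x/(m+1) - 2a) E(m+1) = 2 a x^{m+1}/(m+1)!
    have h1 : (κ * x / (m + 1) - 2 * a) * E (m + 1)
        = 2 * a * x ^ (m + 1) / (Nat.factorial (m + 1) : ℝ) := by
      rw [hsucc] at hroot'
      field_simp at hroot' ⊢
      linarith [hroot']
    have h2 : κ * x / (m + 1) - 2 * a = a * β := by
      rw [hβdef, hxdef]; field_simp; ring
    rw [h2] at h1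
    apply mul_left_cancel₀ ha0.ne'
    rw [← mul_assoc, h1]
    field_simp
  -- derivative of the explicit profile
  set F : ℝ → ℝ := fun σ => 2 * σ / μ -
      (β / μ ^ (m + 2)) *
        ∑ j ∈ Finset.range (m + 1),
          ((Nat.factorial (m + 1) : ℝ) / (Nat.factorial j : ℝ)) * μ ^ j * σ ^ ((j : ℤ) - m)
    with hFdef
  have hev : deriv φ a = deriv F a := by
    apply Filter.EventuallyEq.deriv_eq
    filter_upwards [Ioi_mem_nhds ha0] with σ hσ
    rw [hφ σ hσ, hFdef]
  have hF : HasDerivAt F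
      (2 / μ - (β / μ ^ (m + 2)) *
        ∑ j ∈ Finset.range (m + 1),
          ((Nat.factorial (m + 1) : ℝ) / (Nat.factorial j : ℝ)) * μ ^ j *
            (((j : ℤ) - m : ℤ) * a ^ ((j : ℤ) - m - 1))) a := by
    apply HasDerivAt.sub
    · simpa using ((hasDerivAt_id a).const_mul 2).div_const μ
    · apply HasDerivAt.const_mul
      apply HasDerivAt.fun_sum
      intro j _
      exact (hasDerivAt_zpow ((j : ℤ) - m) a (Or.inl ha0.ne')).const_mul _
  rw [hev, hF.deriv]
  constructor
  · -- final algebra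
    have hfacn : ((Nat.factorial (m+1) : ℝ)) ≠ 0 := by positivity
    have hfacm : ((Nat.factorial m : ℝ)) ≠ 0 := by positivity
    have hsum : ∑ j ∈ Finset.range (m + 1),
        ((Nat.factorial (m + 1) : ℝ) / (Nat.factorial j : ℝ)) * μ ^ j *
          (((j : ℤ) - m : ℤ) * a ^ ((j : ℤ) - m - 1))
        = (Nat.factorial (m+1) : ℝ) / a ^ (m+1) *
            ((x - m) * E (m+1) - x ^ (m+1) / (Nat.factorial m : ℝ)) := by
      have h1 : ∀ j ∈ Finset.range (m + 1),
          ((Nat.factorial (m + 1) : ℝ) / (Nat.factorial j : ℝ)) * μ ^ j *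
            (((j : ℤ) - m : ℤ) * a ^ ((j : ℤ) - m - 1))
          = (Nat.factorial (m+1) : ℝ) / a ^ (m+1) *
              (((j : ℝ) - m) * x ^ j / (Nat.factorial j : ℝ)) := by
        intro j _
        have hz : a ^ ((j : ℤ) - m - 1) = a ^ j / a ^ (m+1) := by
          rw [show ((j:ℤ) - m - 1) = (j:ℤ) - ((m+1 : ℕ) : ℤ) by push_cast; ring,
            zpow_sub₀ ha0.ne', zpow_natCast, zpow_natCast]
        rw [hz, hxdef, mul_pow]
        have h0 : (Nat.factorial j : ℝ) ≠ 0 := by positivity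
        have ha1 : a ^ (m+1) ≠ 0 := by positivity
        push_cast
        field_simp
      rw [Finset.sum_congr rfl h1, ← Finset.mul_sum]
      congr 1
      have hsplit : ∑ j ∈ Finset.range (m + 1),
          (((j : ℝ) - m) * x ^ j / (Nat.factorial j : ℝ))
          = (∑ j ∈ Finset.range (m + 1), (j : ℝ) * x ^ j / (Nat.factorial j : ℝ))
            - (m : ℝ) * ∑ j ∈ Finset.range (m + 1), x ^ j / (Nat.factorial j : ℝ) := by
        rw [Finset.mul_sum, ← Finset.sum_sub_distrib]
        refine Finset.sum_congr rfl fun j _ => ?_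
        ring
      rw [hsplit, aux_shift x m]
      have hEm : E (m+1) = E m + x ^ m / (Nat.factorial m : ℝ) := by
        rw [hEdef]; exact Finset.sum_range_succ _ m
      rw [show (∑ j ∈ Finset.range (m + 1), x ^ j / (Nat.factorial j : ℝ)) = E (m+1) from rfl,
        hEm]
      ring
    rw [hsum]
    have h3 : β / μ ^ (m+2) * ((Nat.factorial (m+1) : ℝ) / a ^ (m+1) *
          ((x - m) * E (m+1) - x ^ (m+1) / (Nat.factorial m : ℝ)))
        = (Nat.factorial (m+1) : ℝ) / (μ ^ (m+2) * a ^ (m+1)) *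
          ((x - m) * (β * E (m+1)) - β * x ^ (m+1) / (Nat.factorial m : ℝ)) := by
      ring
    rw [h3, hkey]
    have hfs : (Nat.factorial (m+1) : ℝ) = ((m : ℝ) + 1) * (Nat.factorial m : ℝ) := by
      push_cast [Nat.factorial_succ]; ring
    have hxp : x ^ (m+1) = a ^ (m+1) * μ ^ (m+1) := by rw [hxdef, mul_pow]
    rw [hfs, hxp, hβdef, pow_succ μ (m+1)]
    have ha1 : a ^ (m+1) ≠ 0 := by positivity
    have hμ2 : μ ^ (m+1) ≠ 0 := by positivity
    have hm1' : ((m:ℝ) + 1) ≠ 0 := hm1.ne'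
    field_simp
    ring
  · rw [ha]; ring
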